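/- Let (X, ‖·‖) be a Banach space, A = B_X the closed unit ball, and B = {x ∈ X : ‖x‖ ≥ 2}. Suppose X is nontrivial (so B is nonempty) and the ordered pair (B_X, B) satisfies the UC property. If {x_n}, {z_n} ⊂ B_X are sequences with lim_{n→∞} ‖(x_n + z_n)/2‖ = 1, then lim_{n→∞} ‖x_n − z_n‖ = 0. -/

import Mathlib

open Filter Topology

/-- dist(A,B) = inf{‖a−b‖ : a ∈ A, b ∈ B}. -/
noncomputable def SetDist {X : Type*} [MetricSpace X] (A B : Set X) : ℝ :=
  sInf (Set.image2 dist A B)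

/-- The ordered pair (A,B) satisfies the UC property. -/
def UCprop {X : Type*} [MetricSpace X] (A B : Set X) : Prop :=
  ∀ (x z : ℕ → X) (y : ℕ → X), (∀ n, x n ∈ A) → (∀ n, z n ∈ A) → (∀ n, y n ∈ B) →
    Tendsto (fun n => dist (x n) (y n)) atTop (𝓝 (SetDist A B)) →
    Tendsto (fun n => dist (z n) (y n)) atTop (𝓝 (SetDist A B)) →
    Tendsto (fun n => dist (x n) (z n)) atTop (𝓝 0)

theorem stmt12 {X : Type*} [NormedAddCommGroup X] [NormedSpace ℝ X] [CompleteSpace X]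
    [Nontrivial X]
    (hUC : UCprop (Metric.closedBall (0 : X) 1) {x : X | 2 ≤ ‖x‖})
    (x z : ℕ → X)
    (hx : ∀ n, x n ∈ Metric.closedBall (0 : X) 1)
    (hz : ∀ n, z n ∈ Metric.closedBall (0 : X) 1)
    (hmid : Tendsto (fun n => ‖(1 / 2 : ℝ) • (x n + z n)‖) atTop (𝓝 1)) :
    Tendsto (fun n => ‖x n - z n‖) atTop (𝓝 0) := by
  obtain ⟨v, hv⟩ := exists_ne (0 : X)
  have hvn : (0:ℝ) < ‖v‖ := norm_pos_iff.mpr hv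
  set w : X := (2 / ‖v‖) • v with hw
  have hwn : ‖w‖ = 2 := by
    rw [hw, norm_smul, Real.norm_eq_abs, abs_of_pos (by positivity),
      div_mul_cancel₀ _ hvn.ne']
  have hx' : ∀ n, ‖x n‖ ≤ 1 := fun n => by simpa using hx n
  have hz' : ∀ n, ‖z n‖ ≤ 1 := fun n => by simpa using hz n
  -- SetDist = 1
  have hSD : SetDist (Metric.closedBall (0 : X) 1) {x : X | 2 ≤ ‖x‖} = 1 := by
    unfold SetDist
    have hlb : ∀ d ∈ Set.image2 dist (Metric.closedBall (0 : X) 1) {x : X | 2 ≤ ‖x‖},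
        (1:ℝ) ≤ d := by
      rintro d ⟨a, ha, b, hb, rfl⟩
      have ha' : ‖a‖ ≤ 1 := by simpa using ha
      have hb' : (2:ℝ) ≤ ‖b‖ := hb
      have h1 : ‖b‖ - ‖a‖ ≤ ‖b - a‖ := norm_sub_norm_le _ _
      have h2 : dist a b = ‖b - a‖ := by rw [dist_eq_norm, norm_sub_rev]
      linarith
    apply le_antisymm
    · apply csInf_le ⟨1, hlb⟩
      refine ⟨(1/2 : ℝ) • w, ?_, w, ?_, ?_⟩
      · simp [norm_smul, hwn]
      · simp [hwn]
      · rw [dist_eq_norm]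
        have : (1/2 : ℝ) • w - w = (-(1/2) : ℝ) • w := by
          rw [neg_smul]; module
        rw [this, norm_smul, Real.norm_eq_abs, hwn, abs_neg,
          abs_of_nonneg (by norm_num : (0:ℝ) ≤ 1/2)]
        norm_num
    · exact le_csInf ⟨_, ⟨(1/2 : ℝ) • w, by simp [norm_smul, hwn], w, by simp [hwn], rfl⟩⟩ hlb
  set m : ℕ → X := fun n => (1/2 : ℝ) • (x n + z n) with hm
  set y : ℕ → X := fun n => if ‖m n‖ = 0 then w else (2 / ‖m n‖) • m n with hy
  have hyn : ∀ n, ‖y n‖ = 2 := by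
    intro n
    by_cases h : ‖m n‖ = 0
    · simp [hy, h, hwn]
    · simp only [hy, if_neg h]
      rw [norm_smul, Real.norm_eq_abs, abs_of_pos (by positivity), div_mul_cancel₀ _ h]
  have hev : ∀ᶠ n in atTop, (1/2 : ℝ) ≤ ‖m n‖ := by
    exact hmid.eventually (eventually_ge_nhds (by norm_num))
  -- upper bound function
  have hub : ∀ᶠ n in atTop, dist (x n) (y n) ≤ 1 + |2 * ‖m n‖ - 2| ∧
      dist (z n) (y n) ≤ 1 + |2 * ‖m n‖ - 2| := by
    filter_upwards [hev] with n hn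
    have hmne : ‖m n‖ ≠ 0 := by linarith
    have hyeq : y n = (2 / ‖m n‖) • m n := by simp [hy, hmne]
    have h2m : (2:ℝ) • m n = x n + z n := by
      rw [hm]; module
    have key : ‖(2:ℝ) • m n - y n‖ = |2 * ‖m n‖ - 2| := by
      have : (2:ℝ) • m n - y n = (2 - 2 / ‖m n‖) • m n := by
        rw [hyeq]; module
      rw [this, norm_smul, Real.norm_eq_abs, ← abs_of_nonneg (norm_nonneg (m n)),
        ← abs_mul]
      congr 1
      field_simp
      rw [abs_of_nonneg (norm_nonneg (m n))]; ring
    constructor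
    · calc dist (x n) (y n) = ‖(x n - (2:ℝ) • m n) + ((2:ℝ) • m n - y n)‖ := by
            rw [dist_eq_norm]; congr 1; module
        _ ≤ ‖x n - (2:ℝ) • m n‖ + ‖(2:ℝ) • m n - y n‖ := norm_add_le _ _
        _ ≤ 1 + |2 * ‖m n‖ - 2| := by
            have : x n - (2:ℝ) • m n = -(z n) := by rw [h2m]; module
            rw [this, norm_neg, key]
            linarith [hz' n]
    · calc dist (z n) (y n) = ‖(z n - (2:ℝ) • m n) + ((2:ℝ) • m n - y n)‖ := by
            rw [dist_eq_norm]; congr 1; module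
        _ ≤ ‖z n - (2:ℝ) • m n‖ + ‖(2:ℝ) • m n - y n‖ := norm_add_le _ _
        _ ≤ 1 + |2 * ‖m n‖ - 2| := by
            have : z n - (2:ℝ) • m n = -(x n) := by rw [h2m]; module
            rw [this, norm_neg, key]
            linarith [hx' n]
  have hlb1 : ∀ n, (1:ℝ) ≤ dist (x n) (y n) := by
    intro n
    have h1 : ‖y n‖ - ‖x n‖ ≤ ‖y n - x n‖ := norm_sub_norm_le _ _
    have h2 : dist (x n) (y n) = ‖y n - x n‖ := by rw [dist_eq_norm, norm_sub_rev]
    have := hx' n; have := hyn n; linarith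
  have hlb2 : ∀ n, (1:ℝ) ≤ dist (z n) (y n) := by
    intro n
    have h1 : ‖y n‖ - ‖z n‖ ≤ ‖y n - z n‖ := norm_sub_norm_le _ _
    have h2 : dist (z n) (y n) = ‖y n - z n‖ := by rw [dist_eq_norm, norm_sub_rev]
    have := hz' n; have := hyn n; linarith
  have hubt : Tendsto (fun n => 1 + |2 * ‖m n‖ - 2|) atTop (𝓝 1) := by
    have : Tendsto (fun n => |2 * ‖m n‖ - 2|) atTop (𝓝 0) := by
      have h2 : Tendsto (fun n => 2 * ‖m n‖ - 2) atTop (𝓝 (2 * 1 - 2)) :=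
        (hmid.const_mul (2:ℝ)).sub_const 2
      norm_num at h2
      simpa using h2.abs
    simpa using (tendsto_const_nhds (x := (1:ℝ))).add this
  have hdx : Tendsto (fun n => dist (x n) (y n)) atTop (𝓝 1) :=
    tendsto_of_tendsto_of_tendsto_of_le_of_le' tendsto_const_nhds hubt
      (Eventually.of_forall hlb1) (hub.mono fun n h => h.1)
  have hdz : Tendsto (fun n => dist (z n) (y n)) atTop (𝓝 1) :=
    tendsto_of_tendsto_of_tendsto_of_le_of_le' tendsto_const_nhds hubt
      (Eventually.of_forall hlb2) (hub.mono fun n h => h.2)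
  have hyB : ∀ n, y n ∈ {x : X | 2 ≤ ‖x‖} := fun n => (hyn n).ge
  have := hUC x z y hx hz hyB (by rw [hSD]; exact hdx) (by rw [hSD]; exact hdz)
  simpa [dist_eq_norm] using this
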